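/- Let G be a finite group whose group algebra kG is local, Λ a finite-dimensional algebra with G-action, and A = Λ*G. Let N be an A-module such that Ext^1_A(N, N) = 0. Then for every finite-dimensional G-module X, the A-module X ⊗_k^G N lies in add N; moreover kG ⊗_k^G N ≅ ⊕_S (S ⊗_k^G N) where S runs over the composition factors of kG, and the canonical map kG ⊗_k^G N → N splits. -/

import Mathlib

/-! If the group algebra `kG` is local and `N` is a rigid `A = Λ * G`-module, then
`X ⊗_k^G N ∈ add N` for every finite-dimensional `G`-module `X`; moreover
`kG ⊗_k^G N` decomposes as the direct sum of `S ⊗_k^G N` over the composition factors `S`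
of `kG` (all of which are the trivial module, `|G|` of them), and the canonical map
`kG ⊗_k^G N → N` splits. -/

open scoped TensorProduct

universe u

/-- An axiomatization of the skew group algebra `A = Λ * G`. -/
structure SkewGroupAlgebra (k : Type u) [Field k] (Λ : Type u) [Ring Λ] [Algebra k Λ]
    (G : Type u) [Group G] [Fintype G] (σ : G →* (Λ ≃ₐ[k] Λ))
    (A : Type u) [Ring A] [Algebra k A] : Type u where
  ι : Λ →ₐ[k] A
  u : G →* Aˣ
  skew_comm : ∀ (g : G) (r : Λ), (u g : A) * ι r = ι (σ g r) * (u g : A)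
  repr_unique : ∀ a : A, ∃! c : G → Λ, a = ∑ g : G, ι (c g) * (u g : A)

/-- The old `Representation.ofMulAction k G H`, acting on `H →₀ k` by `Finsupp.lmapDomain`. -/
noncomputable def ofMulActionFinsupp (k G H : Type*) [CommSemiring k] [Monoid G] [MulAction G H] :
    Representation k G (H →₀ k) where
  toFun g := Finsupp.lmapDomain k k (g • ·)
  map_one' := by
    ext x y
    simp
  map_mul' := by
    intro x y
    ext z w
    simp [mul_smul]

/-- `T` is (a realization of) the `A`-module `X ⊗_k^G N`. -/
structure IsGTensor {k Λ G A : Type u} [Field k] [Ring Λ] [Algebra k Λ]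
    [Group G] [Fintype G] {σ : G →* (Λ ≃ₐ[k] Λ)} [Ring A] [Algebra k A]
    (S : SkewGroupAlgebra k Λ G σ A)
    (X : Type u) [AddCommGroup X] [Module k X] (ρ : Representation k G X)
    (N : Type u) [AddCommGroup N] [Module A N] [Module k N] [IsScalarTower k A N]
    (T : Type u) [AddCommGroup T] [Module A T] : Type u where
  e : X ⊗[k] N ≃+ T
  smul_e : ∀ (r : Λ) (g : G) (x : X) (n : N),
    (S.ι r * (S.u g : A)) • e (x ⊗ₜ[k] n) = e (ρ g x ⊗ₜ[k] ((S.ι r * (S.u g : A)) • n))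

lemma aux_nonunit_mul {R : Type u} [Ring R] [IsLocalRing R] (r : R) {x : R}
    (hx : ¬ IsUnit x) : ¬ IsUnit (r * x) := by
  intro h
  obtain ⟨u, hu⟩ := h
  set y := ((u⁻¹ : Rˣ) : R) * r with hy
  have hyx : y * x = 1 := by rw [hy, mul_assoc, ← hu, Units.inv_mul]
  have hee : (x * y) * (x * y) = x * y := by
    rw [mul_assoc, ← mul_assoc y, hyx, one_mul]
  rcases IsLocalRing.isUnit_or_isUnit_of_add_one
      (a := x * y) (b := 1 - (x * y)) (by rw [add_sub_cancel]) with h1 | h2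
  · have hxy : x * y = 1 :=
      h1.mul_left_cancel (show (x*y)*(x*y) = (x*y)*1 by rw [mul_one]; exact hee)
    exact hx ⟨⟨x, y, hxy, hyx⟩, rfl⟩
  · have hff : (1 - x * y) * (1 - x * y) = (1 - x * y) * 1 := by
      calc (1 - x*y) * (1 - x*y) = 1 - x*y - ((x*y) - (x*y)*(x*y)) := by noncomm_ring
        _ = 1 - x*y - 0 := by rw [hee, sub_self]
        _ = (1 - x*y) * 1 := by noncomm_ring
    have h1e : (1 : R) - x * y = 1 := h2.mul_left_cancel hff
    have h0 : x * y = 0 := sub_eq_self.mp h1e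
    have hx0 : x = 0 := by
      calc x = x * (y * x) := by rw [hyx, mul_one]
        _ = (x * y) * x := (mul_assoc x y x).symm
        _ = 0 := by rw [h0, zero_mul]
    have : (0 : R) = 1 := by rw [← hyx, hx0, mul_zero]
    exact zero_ne_one this

lemma aux_sub_one_nonunit {k G : Type u} [Field k] [Group G] (g : G) :
    ¬ IsUnit ((MonoidAlgebra.single g (1:k) : MonoidAlgebra k G) - 1) := by
  intro h
  have h2 := h.map (MonoidAlgebra.lift k k G (1 : G →* k))
  simp only [map_sub, MonoidAlgebra.lift_single, MonoidHom.one_apply, one_smul,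
    map_one, sub_self] at h2
  exact (not_isUnit_zero h2 : False)

open Module

lemma aux_exists_fixed {k G : Type u} [Field k] [Group G] [Fintype G]
    (hloc : IsLocalRing (MonoidAlgebra k G))
    {V : Type u} [AddCommGroup V] [Module k V] [FiniteDimensional k V]
    (ρ : Representation k G V) (U : Submodule k V)
    (hU : ∀ g, ∀ x ∈ U, ρ g x ∈ U) (hUne : U ≠ ⊥) :
    ∃ v ∈ U, v ≠ 0 ∧ ∀ g, ρ g v = v := by
  classical
  have hP : ∃ n, ∃ U' : Submodule k V, U' ≤ U ∧ (∀ g, ∀ x ∈ U', ρ g x ∈ U') ∧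
      U' ≠ ⊥ ∧ finrank k U' = n := ⟨finrank k U, U, le_rfl, hU, hUne, rfl⟩
  obtain ⟨U', hU'le, hU'stab, hU'ne, hU'rank⟩ := Nat.find_spec hP
  -- every element of U' is fixed
  have hfix : ∀ s ∈ U', ∀ g, ρ g s = s := by
    intro s hs g
    by_contra hne
    have hw : ρ g s - s ≠ 0 := sub_ne_zero.mpr hne
    set w := ρ g s - s with hwdef
    have hwU' : w ∈ U' := U'.sub_mem (hU'stab g s hs) hs
    -- closure of U' under asAlgebraHom
    have hclos : ∀ (r : MonoidAlgebra k G), ∀ x ∈ U', ρ.asAlgebraHom r x ∈ U' := by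
      intro r
      induction r using MonoidAlgebra.induction_on with
      | of a =>
        intro x hx
        rw [MonoidAlgebra.of_apply, Representation.asAlgebraHom_single, one_smul]
        exact hU'stab a x hx
      | add f g hf hg =>
        intro x hx
        rw [map_add, LinearMap.add_apply]
        exact U'.add_mem (hf x hx) (hg x hx)
      | smul c f hf =>
        intro x hx
        rw [map_smul, LinearMap.smul_apply]
        exact U'.smul_mem c (hf x hx)
    -- the linear map r ↦ asAlgebraHom r w
    set ℓ : MonoidAlgebra k G →ₗ[k] V :=
      { toFun := fun r => ρ.asAlgebraHom r w
        map_add' := fun a b => by simp [map_add]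
        map_smul' := fun c a => by simp [map_smul] } with hldef
    set D := LinearMap.range ℓ with hD
    have hDle : D ≤ U' := by
      rintro _ ⟨r, rfl⟩
      exact hclos r w hwU'
    have hDstab : ∀ g', ∀ x ∈ D, ρ g' x ∈ D := by
      rintro g' _ ⟨r, rfl⟩
      refine ⟨MonoidAlgebra.single g' 1 * r, ?_⟩
      show ρ.asAlgebraHom _ w = _
      rw [map_mul, Module.End.mul_apply, Representation.asAlgebraHom_single, one_smul]
      rfl
    have hDne : D ≠ ⊥ := by
      intro hbot
      have hwD : w ∈ D := ⟨1, by show ρ.asAlgebraHom 1 w = w; rw [map_one]; simp [Module.End.one_apply]⟩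
      rw [hbot, Submodule.mem_bot] at hwD
      exact hw hwD
    have hmin : Nat.find hP ≤ finrank k D :=
      Nat.find_min' hP ⟨D, hDle.trans hU'le, hDstab, hDne, rfl⟩
    have hle : finrank k D ≤ finrank k U' := Submodule.finrank_mono hDle
    have hDU' : D = U' :=
      Submodule.eq_of_le_of_finrank_le hDle (by omega)
    have hsD : s ∈ D := hDU' ▸ hs
    obtain ⟨r, hr⟩ := hsD
    have hrs : ρ.asAlgebraHom r w = s := hr
    have hws : ρ.asAlgebraHom (MonoidAlgebra.single g 1 - 1) s = w := by
      rw [map_sub, LinearMap.sub_apply, map_one, Representation.asAlgebraHom_single, one_smul]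
      simp [Module.End.one_apply, hwdef]
    set x : MonoidAlgebra k G := r * (MonoidAlgebra.single g 1 - 1) with hx
    have hzero : ρ.asAlgebraHom ((1 : MonoidAlgebra k G) - x) s = 0 := by
      rw [map_sub, LinearMap.sub_apply, map_one, hx, map_mul, Module.End.mul_apply,
        hws, hrs]
      simp [Module.End.one_apply]
    have hxnu : ¬ IsUnit x := aux_nonunit_mul r (aux_sub_one_nonunit g)
    have hunit : IsUnit ((1 : MonoidAlgebra k G) - x) := by
      rcases IsLocalRing.isUnit_or_isUnit_of_add_one
        (a := (1 : MonoidAlgebra k G) - x) (b := x) (by rw [sub_add_cancel]) with h | h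
      · exact h
      · exact absurd h hxnu
    obtain ⟨v, hv⟩ := hunit
    have hs0 : s = 0 := by
      have : ρ.asAlgebraHom (((v⁻¹ : _ˣ) : MonoidAlgebra k G) * ((1 : MonoidAlgebra k G) - x)) s = 0 := by
        rw [map_mul, Module.End.mul_apply, hzero, map_zero]
      rw [← hv, Units.inv_mul, map_one] at this
      simp [Module.End.one_apply] at this
      exact this
    rw [hs0] at hwdef
    rw [hwdef] at hw
    simp at hw
  obtain ⟨v, hvU', hvne⟩ := Submodule.ne_bot_iff U' |>.mp hU'ne
  exact ⟨v, hU'le hvU', hvne, hfix v hvU'⟩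

lemma aux_corank_one {k G : Type u} [Field k] [Group G] [Fintype G]
    (hloc : IsLocalRing (MonoidAlgebra k G))
    {V : Type u} [AddCommGroup V] [Module k V] [FiniteDimensional k V]
    (ρ : Representation k G V) (W : Submodule k V)
    (hW : ∀ g, ∀ x ∈ W, ρ g x ∈ W) (hWne : W ≠ ⊥) :
    ∃ (M : Submodule k V) (v : V), M ≤ W ∧ (∀ g, ∀ x ∈ M, ρ g x ∈ M) ∧ v ∈ W ∧ v ∉ M ∧
      (∀ g, ∀ x ∈ W, ρ g x - x ∈ M) ∧ (∀ x ∈ W, ∃ a : k, x - a • v ∈ M) := by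
  classical
  set P : ℕ → Prop := fun m => ∃ M : Submodule k V, M < W ∧
    (∀ g, ∀ x ∈ M, ρ g x ∈ M) ∧ finrank k M = m with hPdef
  have hP0 : P 0 := ⟨⊥, bot_lt_iff_ne_bot.mpr hWne,
    fun g x hx => by rw [Submodule.mem_bot] at hx ⊢; rw [hx, map_zero], finrank_bot k V⟩
  obtain ⟨M, hMW, hMstab, hMrank⟩ :=
    Nat.findGreatest_spec (P := P) (n := finrank k V) (Nat.zero_le _) hP0
  have hmax : ∀ M' : Submodule k V, M < M' → M' ≤ W →
      (∀ g, ∀ x ∈ M', ρ g x ∈ M') → M' = W := by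
    intro M' hlt hle hstab
    by_contra hne
    have hPM' : P (finrank k M') := ⟨M', lt_of_le_of_ne hle hne, hstab, rfl⟩
    have hb : finrank k M' ≤ finrank k V := M'.finrank_le
    have h1 : finrank k M' ≤ Nat.findGreatest P (finrank k V) := Nat.le_findGreatest hb hPM'
    have h2 : finrank k M < finrank k M' := Submodule.finrank_lt_finrank_of_lt hlt
    omega
  -- quotient representation
  set π := M.mkQ with hπ
  have hstab' : ∀ g : G, M ≤ M.comap (ρ g) := fun g x hx => hMstab g x hx
  set ρ' : Representation k G (V ⧸ M) :=
    { toFun := fun g => Submodule.mapQ M M (ρ g) (hstab' g)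
      map_one' := by
        refine LinearMap.ext fun q => ?_
        obtain ⟨x, rfl⟩ := M.mkQ_surjective q
        simp [Submodule.mapQ_apply]
      map_mul' := fun g₁ g₂ => by
        refine LinearMap.ext fun q => ?_
        obtain ⟨x, rfl⟩ := M.mkQ_surjective q
        simp [Module.End.mul_apply, Submodule.mapQ_apply] } with hρ'
  have hρ'apply : ∀ (g : G) (x : V), ρ' g (π x) = π (ρ g x) := by
    intro g x
    show Submodule.mapQ M M (ρ g) (hstab' g) (M.mkQ x) = _
    rw [Submodule.mkQ_apply, Submodule.mapQ_apply]
    rfl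
  set Wb := W.map π with hWb
  have hWbstab : ∀ g, ∀ y ∈ Wb, ρ' g y ∈ Wb := by
    rintro g y ⟨x, hx, rfl⟩
    exact ⟨ρ g x, hW g x hx, (hρ'apply g x).symm⟩
  obtain ⟨v, hvW, hvM⟩ := SetLike.exists_of_lt hMW
  have hπv : π v ≠ 0 := by
    intro h0
    exact hvM ((Submodule.Quotient.mk_eq_zero M).mp h0)
  have hWbne : Wb ≠ ⊥ := by
    intro hbot
    have : π v ∈ Wb := ⟨v, hvW, rfl⟩
    rw [hbot, Submodule.mem_bot] at this
    exact hπv this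
  -- `Wb` is simple
  have hsimple : ∀ U : Submodule k (V ⧸ M), U ≤ Wb → (∀ g, ∀ y ∈ U, ρ' g y ∈ U) →
      U ≠ ⊥ → U = Wb := by
    intro U hUle hUstab hUne
    obtain ⟨u, huU, hune⟩ := (Submodule.ne_bot_iff U).mp hUne
    obtain ⟨w₀, hw₀W, hw₀u⟩ := hUle huU
    set M' := W ⊓ Submodule.comap π U with hM'
    have hM'stab : ∀ g, ∀ x ∈ M', ρ g x ∈ M' := by
      rintro g x ⟨hxW, hxU⟩
      refine ⟨hW g x hxW, ?_⟩
      show π (ρ g x) ∈ U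
      rw [← hρ'apply g x]
      exact hUstab g (π x) hxU
    have hMM' : M < M' := by
      refine lt_of_le_of_ne (le_inf hMW.le fun x hx => ?_) ?_
      · show π x ∈ U
        have : π x = 0 := (Submodule.Quotient.mk_eq_zero M).mpr hx
        rw [this]; exact U.zero_mem
      · intro heq
        have hw₀M' : w₀ ∈ M' := ⟨hw₀W, show π w₀ ∈ U by rw [hw₀u]; exact huU⟩
        rw [← heq] at hw₀M'
        have : π w₀ = 0 := (Submodule.Quotient.mk_eq_zero M).mpr hw₀M'
        rw [hw₀u] at this
        exact hune this
    have hM'W : M' = W := hmax M' hMM' inf_le_left hM'stab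
    refine le_antisymm hUle ?_
    rintro _ ⟨x, hxW, rfl⟩
    have : x ∈ M' := hM'W ▸ hxW
    exact this.2
  -- all of `Wb` is fixed
  have htriv : ∀ g, ∀ y ∈ Wb, ρ' g y = y := by
    classical
    set F : Submodule k (V ⧸ M) := Wb ⊓ ⨅ g : G, LinearMap.ker (ρ' g - LinearMap.id) with hF
    have hFmem : ∀ y, y ∈ F ↔ y ∈ Wb ∧ ∀ g, ρ' g y = y := by
      intro y
      rw [hF, Submodule.mem_inf, Submodule.mem_iInf]
      refine and_congr_right fun _ => forall_congr' fun g => ?_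
      rw [LinearMap.mem_ker, LinearMap.sub_apply, LinearMap.id_apply, sub_eq_zero]
    have hFstab : ∀ g, ∀ y ∈ F, ρ' g y ∈ F := by
      intro g y hy
      rw [(hFmem y).mp hy |>.2 g]
      exact hy
    obtain ⟨y₀, hy₀Wb, hy₀ne, hy₀fix⟩ := aux_exists_fixed hloc ρ' Wb hWbstab hWbne
    have hFne : F ≠ ⊥ := by
      intro hbot
      have : y₀ ∈ F := (hFmem y₀).mpr ⟨hy₀Wb, hy₀fix⟩
      rw [hbot, Submodule.mem_bot] at this
      exact hy₀ne this
    have hFWb : F = Wb := hsimple F inf_le_left hFstab hFne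
    intro g y hy
    exact ((hFmem y).mp (hFWb ▸ hy)).2 g
  have hπWb : ∀ x ∈ W, π x ∈ Wb := fun x hx => ⟨x, hx, rfl⟩
  have hspan : Submodule.span k {π v} = Wb := by
    refine hsimple _ ((Submodule.span_singleton_le_iff_mem _ _).mpr (hπWb v hvW)) ?_ ?_
    · intro g y hy
      have hyWb : y ∈ Wb := (Submodule.span_singleton_le_iff_mem _ _).mpr (hπWb v hvW) hy
      rw [htriv g y hyWb]
      exact hy
    · rw [Ne, Submodule.span_singleton_eq_bot]
      exact hπv
  refine ⟨M, v, hMW.le, hMstab, hvW, hvM, ?_, ?_⟩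
  · intro g x hx
    have : π (ρ g x - x) = 0 := by
      rw [map_sub, ← hρ'apply g x, htriv g (π x) (hπWb x hx), sub_self]
    exact (Submodule.Quotient.mk_eq_zero M).mp this
  · intro x hx
    have : π x ∈ Submodule.span k {π v} := hspan ▸ hπWb x hx
    obtain ⟨a, ha⟩ := Submodule.mem_span_singleton.mp this
    refine ⟨a, (Submodule.Quotient.mk_eq_zero M).mp ?_⟩
    show π (x - a • v) = 0
    rw [map_sub, map_smul, ← ha, sub_self]


/-- Extensions of `N` by finite direct sums of `N` split. -/
lemma aux_keyA {A N : Type u} [Ring A] [AddCommGroup N] [Module A N]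
    (hrigid : ∀ (E : Type u) [AddCommGroup E] [Module A E]
      (i : N →ₗ[A] E) (p : E →ₗ[A] N),
      Function.Injective i → Function.Surjective p → Function.Exact i p →
      ∃ s : N →ₗ[A] E, p ∘ₗ s = LinearMap.id) :
    ∀ (j : ℕ) (E : Type u) [AddCommGroup E] [Module A E]
      (i : (Fin j → N) →ₗ[A] E) (p : E →ₗ[A] N),
      Function.Injective i → Function.Surjective p →
      LinearMap.ker p = LinearMap.range i →
      ∃ s : N →ₗ[A] E, p ∘ₗ s = LinearMap.id := by
  classical
  intro j
  induction j with
  | zero =>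
    intro E _ _ i p hi hp hker
    have hpinj : Function.Injective p := by
      rw [← LinearMap.ker_eq_bot, hker]
      refine le_antisymm ?_ bot_le
      rintro _ ⟨w, rfl⟩
      have : w = 0 := Subsingleton.elim w 0
      rw [this, map_zero]
      exact Submodule.zero_mem ⊥
    let eq := LinearEquiv.ofBijective p ⟨hpinj, hp⟩
    refine ⟨eq.symm.toLinearMap, ?_⟩
    refine LinearMap.ext fun n => ?_
    exact eq.apply_symm_apply n
  | succ j ih =>
    intro E _ _ i p hi hp hker
    -- embed `N` as the 0-th coordinate
    let e₀ : N →ₗ[A] (Fin (j+1) → N) := LinearMap.single A (fun _ : Fin (j+1) => N) 0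
    let ext : (Fin j → N) →ₗ[A] (Fin (j+1) → N) :=
      LinearMap.pi (fun j' => Fin.cases (0 : (Fin j → N) →ₗ[A] N)
        (fun m => LinearMap.proj m) j')
    have hext_zero : ∀ w, ext w 0 = 0 := fun w => rfl
    have hext_succ : ∀ w m, ext w (Fin.succ m) = w m := fun w m => rfl
    have hdecomp : ∀ v : Fin (j+1) → N, v = Pi.single 0 (v 0) + ext (Fin.tail v) := by
      intro v
      funext m
      refine Fin.cases ?_ (fun m' => ?_) m
      · simp [hext_zero]
      · simp [hext_succ, Fin.tail, Pi.single_eq_of_ne (Fin.succ_ne_zero m')]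
    let i₀ : N →ₗ[A] E := i ∘ₗ e₀
    have hi₀ : Function.Injective i₀ := by
      intro a b hab
      have := hi hab
      have := congrFun this 0
      simpa [e₀, Pi.single_eq_same] using this
    set K := LinearMap.range i₀ with hK
    have hKker : K ≤ LinearMap.ker p := by
      rintro _ ⟨n, rfl⟩
      rw [hker]
      exact ⟨e₀ n, rfl⟩
    let pbar : (E ⧸ K) →ₗ[A] N := Submodule.liftQ K p hKker
    let ibar : (Fin j → N) →ₗ[A] (E ⧸ K) := K.mkQ ∘ₗ i ∘ₗ ext
    have hpbar_mk : ∀ x : E, pbar (K.mkQ x) = p x := fun x => rfl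
    have hibar_inj : Function.Injective ibar := by
      intro w₁ w₂ hw
      have h1 : K.mkQ (i (ext w₁) - i (ext w₂)) = 0 := by
        rw [map_sub, show (K.mkQ (i (ext w₁)) : E ⧸ K) = K.mkQ (i (ext w₂)) from hw, sub_self]
      rw [Submodule.mkQ_apply, Submodule.Quotient.mk_eq_zero] at h1
      obtain ⟨n, hn⟩ := h1
      have h2 : i (ext (w₁ - w₂)) = i (e₀ n) := by
        rw [map_sub, map_sub]
        exact hn.symm
      have h3 := hi h2
      have h4 : w₁ - w₂ = 0 := by
        funext m
        have := congrFun h3 (Fin.succ m)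
        rw [hext_succ] at this
        simpa [e₀, Pi.single_eq_of_ne (Fin.succ_ne_zero m)] using this
      rw [sub_eq_zero] at h4
      exact h4
    have hpbar_surj : Function.Surjective pbar := by
      intro n
      obtain ⟨x, hx⟩ := hp n
      exact ⟨K.mkQ x, hx⟩
    have hexact : LinearMap.ker pbar = LinearMap.range ibar := by
      refine le_antisymm ?_ ?_
      · rintro q hq
        obtain ⟨x, rfl⟩ := K.mkQ_surjective q
        have hx : x ∈ LinearMap.ker p := hq
        rw [hker] at hx
        obtain ⟨v, rfl⟩ := hx
        refine ⟨Fin.tail v, ?_⟩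
        show K.mkQ (i (ext (Fin.tail v))) = K.mkQ (i v)
        have hvdec : i v = i (e₀ (v 0)) + i (ext (Fin.tail v)) := by
          rw [← map_add]
          congr 1
          have h2 := hdecomp v
          funext m
          have h3 := congrFun h2 m
          rw [h3]
          simp [e₀, LinearMap.single_apply]
        have h0 : K.mkQ (i (e₀ (v 0))) = 0 := by
          rw [Submodule.mkQ_apply, Submodule.Quotient.mk_eq_zero]
          exact ⟨v 0, rfl⟩
        rw [hvdec, map_add, h0, zero_add]
      · rintro _ ⟨w, rfl⟩
        show pbar (K.mkQ (i (ext w))) = 0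
        rw [hpbar_mk]
        have : i (ext w) ∈ LinearMap.ker p := by
          rw [hker]; exact ⟨ext w, rfl⟩
        exact this
    obtain ⟨sbar, hsbar⟩ := ih (E ⧸ K) ibar pbar hibar_inj hpbar_surj hexact
    -- pull back along the quotient
    set E₂ : Submodule A E := Submodule.comap K.mkQ (LinearMap.range sbar) with hE₂
    have hi₀mem : ∀ n, i₀ n ∈ E₂ := by
      intro n
      show K.mkQ (i₀ n) ∈ LinearMap.range sbar
      have : K.mkQ (i₀ n) = 0 := by
        rw [Submodule.mkQ_apply, Submodule.Quotient.mk_eq_zero]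
        exact ⟨n, rfl⟩
      rw [this]
      exact ⟨0, map_zero sbar⟩
    let i₂ : N →ₗ[A] E₂ := LinearMap.codRestrict E₂ i₀ hi₀mem
    let p₂ : E₂ →ₗ[A] N := p ∘ₗ E₂.subtype
    have hi₂inj : Function.Injective i₂ := by
      intro a b hab
      exact hi₀ (congrArg Subtype.val hab)
    have hp₂surj : Function.Surjective p₂ := by
      intro n
      obtain ⟨x, hx⟩ := K.mkQ_surjective (sbar n)
      have hxE₂ : x ∈ E₂ := by
        show K.mkQ x ∈ LinearMap.range sbar
        rw [hx]; exact ⟨n, rfl⟩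
      refine ⟨⟨x, hxE₂⟩, ?_⟩
      show p x = n
      have : pbar (K.mkQ x) = pbar (sbar n) := by rw [hx]
      rw [hpbar_mk] at this
      rw [this]
      have := congrFun (congrArg DFunLike.coe hsbar) n
      simpa using this
    have hexact₂ : Function.Exact i₂ p₂ := by
      rw [LinearMap.exact_iff]
      refine le_antisymm ?_ ?_
      · rintro ⟨x, hxE₂⟩ hx
        have hpx : p x = 0 := hx
        have hmk : K.mkQ x ∈ LinearMap.range sbar := hxE₂
        obtain ⟨m, hm⟩ := hmk
        have hm0 : m = 0 := by
          have : pbar (K.mkQ x) = pbar (sbar m) := by rw [hm]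
          rw [hpbar_mk] at this
          have h2 := congrFun (congrArg DFunLike.coe hsbar) m
          simp only [LinearMap.coe_comp, Function.comp_apply, LinearMap.id_apply] at h2
          rw [h2] at this
          exact this.symm.trans hpx
        rw [hm0, map_zero] at hm
        have hxK : x ∈ K := by
          rw [← Submodule.Quotient.mk_eq_zero, ← Submodule.mkQ_apply]
          exact hm.symm
        obtain ⟨n, hn⟩ := hxK
        exact ⟨n, Subtype.ext hn⟩
      · rintro _ ⟨n, rfl⟩
        show p ((i₂ n : E₂) : E) = 0
        have : (i₂ n : E) = i₀ n := rfl
        rw [this]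
        have : i₀ n ∈ LinearMap.ker p := hKker ⟨n, rfl⟩
        exact this
    obtain ⟨s₂, hs₂⟩ := hrigid E₂ i₂ p₂ hi₂inj hp₂surj hexact₂
    refine ⟨E₂.subtype ∘ₗ s₂, ?_⟩
    refine LinearMap.ext fun n => ?_
    have := congrFun (congrArg DFunLike.coe hs₂) n
    simpa [p₂] using this


/-- A split short exact sequence `0 → N^j → E → N → 0` gives `E ≅ N^(j+1)`. -/
lemma aux_splitIso {A N : Type u} [Ring A] [AddCommGroup N] [Module A N]
    {j : ℕ} {E : Type u} [AddCommGroup E] [Module A E]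
    (i : (Fin j → N) →ₗ[A] E) (p : E →ₗ[A] N) (s : N →ₗ[A] E)
    (hi : Function.Injective i) (hker : LinearMap.ker p = LinearMap.range i)
    (hs : p ∘ₗ s = LinearMap.id) :
    Nonempty ((Fin (j+1) → N) ≃ₗ[A] E) := by
  classical
  have hps : ∀ n, p (s n) = n := fun n => congrFun (congrArg DFunLike.coe hs) n
  let tailMap : (Fin (j+1) → N) →ₗ[A] (Fin j → N) :=
    LinearMap.pi (fun m => LinearMap.proj m.succ)
  have htail : ∀ (w : Fin (j+1) → N) (m : Fin j), tailMap w m = w m.succ := fun _ _ => rfl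
  let φ : (Fin (j+1) → N) →ₗ[A] E := i ∘ₗ tailMap + s ∘ₗ LinearMap.proj 0
  have hφ : ∀ w, φ w = i (tailMap w) + s (w 0) := fun _ => rfl
  have hpi : ∀ w, p (i w) = 0 := by
    intro w
    have : i w ∈ LinearMap.ker p := by rw [hker]; exact ⟨w, rfl⟩
    exact this
  have hbij : Function.Bijective φ := by
    constructor
    · intro w₁ w₂ hw
      rw [hφ, hφ] at hw
      have h0 : w₁ 0 = w₂ 0 := by
        have := congrArg p hw
        rw [map_add, map_add, hpi, hpi, zero_add, zero_add, hps, hps] at this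
        exact this
      have htl : tailMap w₁ = tailMap w₂ := by
        apply hi
        have : i (tailMap w₁) + s (w₁ 0) = i (tailMap w₂) + s (w₂ 0) := hw
        rw [h0] at this
        exact add_right_cancel this
      funext m
      refine Fin.cases ?_ (fun m' => ?_) m
      · exact h0
      · have := congrFun htl m'
        rw [htail, htail] at this
        exact this
    · intro x
      have hker' : x - s (p x) ∈ LinearMap.ker p := by
        rw [LinearMap.mem_ker, map_sub, hps, sub_self]
      rw [hker] at hker'
      obtain ⟨w', hw'⟩ := hker'
      refine ⟨Fin.cons (p x) w', ?_⟩
      rw [hφ]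
      have h1 : tailMap (Fin.cons (p x) w') = w' := by
        funext m
        rw [htail]
        simp [Fin.cons_succ]
      rw [h1, hw']
      simp
  exact ⟨LinearEquiv.ofBijective φ hbij⟩

namespace AuxGT

variable {k Λ G A : Type u} [Field k] [Ring Λ] [Algebra k Λ]
  [Group G] [Fintype G] {σ : G →* (Λ ≃ₐ[k] Λ)} [Ring A] [Algebra k A]
  {N : Type u} [AddCommGroup N] [Module A N] [Module k N] [IsScalarTower k A N]
  {X : Type u} [AddCommGroup X] [Module k X] {T : Type u} [AddCommGroup T] [Module A T]

lemma smul_comm' (c : k) (a : A) (n : N) : a • (c • n) = c • (a • n) := by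
  rw [← algebraMap_smul A c n, ← mul_smul, ← Algebra.commutes, mul_smul, algebraMap_smul]

/-- Scalar action of `a : A` on `N` as a `k`-linear map. -/
def actA (a : A) : N →ₗ[k] N where
  toFun := fun n => a • n
  map_add' := fun n m => smul_add a n m
  map_smul' := fun c n => by simp [smul_comm']

variable (S : SkewGroupAlgebra k Λ G σ A) (ρ : Representation k G X)

/-- The action of `ι r * u g` on `X ⊗ N`. -/
noncomputable def Phi (r : Λ) (g : G) : X ⊗[k] N →ₗ[k] X ⊗[k] N :=
  TensorProduct.map (ρ g) (actA (S.ι r * (S.u g : A)))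

lemma Phi_tmul (r : Λ) (g : G) (x : X) (n : N) :
    Phi S ρ r g (x ⊗ₜ[k] n) = ρ g x ⊗ₜ[k] ((S.ι r * (S.u g : A)) • n) := rfl

variable (hT : IsGTensor S X ρ N T)

lemma smulE (r : Λ) (g : G) (ξ : X ⊗[k] N) :
    (S.ι r * (S.u g : A)) • hT.e ξ = hT.e (Phi S ρ r g ξ) := by
  induction ξ using TensorProduct.induction_on with
  | zero => rw [map_zero, smul_zero, map_zero, map_zero]
  | tmul x n => rw [Phi_tmul]; exact hT.smul_e r g x n
  | add ξ₁ ξ₂ h₁ h₂ => rw [map_add, smul_add, h₁, h₂, map_add, map_add]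

lemma smulDecomp (a : A) : ∃ c : G → Λ,
    (a = ∑ g : G, S.ι (c g) * (S.u g : A)) ∧
    (∀ ξ : X ⊗[k] N, a • hT.e ξ = hT.e (∑ g : G, Phi S ρ (c g) g ξ)) := by
  obtain ⟨c, hc, -⟩ := S.repr_unique a
  refine ⟨c, hc, fun ξ => ?_⟩
  rw [map_sum]
  calc a • hT.e ξ = (∑ g : G, S.ι (c g) * (S.u g : A)) • hT.e ξ := by rw [← hc]
    _ = ∑ g : G, (S.ι (c g) * (S.u g : A)) • hT.e ξ := Finset.sum_smul
    _ = ∑ g : G, hT.e (Phi S ρ (c g) g ξ) := by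
        exact Finset.sum_congr rfl fun g _ => smulE S ρ hT (c g) g ξ

lemma Phi_maps {W : Submodule k X} (hW : ∀ g, ∀ x ∈ W, ρ g x ∈ W) (r : Λ) (g : G) :
    ∀ ξ ∈ LinearMap.range (LinearMap.rTensor N W.subtype), Phi S ρ r g ξ ∈ LinearMap.range (LinearMap.rTensor N W.subtype) := by
  rintro _ ⟨ξ₀, rfl⟩
  induction ξ₀ using TensorProduct.induction_on with
  | zero => rw [map_zero, map_zero]; exact Submodule.zero_mem _
  | tmul x n =>
    refine ⟨(⟨ρ g x.1, hW g x.1 x.2⟩ : W) ⊗ₜ[k] actA (k := k) (S.ι r * (S.u g : A)) n, ?_⟩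
    rw [LinearMap.rTensor_tmul, LinearMap.rTensor_tmul, Phi_tmul]
    rfl
  | add ξ₁ ξ₂ h₁ h₂ => rw [map_add, map_add]; exact Submodule.add_mem _ h₁ h₂

/-- The `A`-submodule of `T` corresponding to `W ⊗ N` for a `G`-stable subspace `W`. -/
def TW (W : Submodule k X) (hW : ∀ g, ∀ x ∈ W, ρ g x ∈ W) : Submodule A T where
  carrier := hT.e '' (LinearMap.range (LinearMap.rTensor N W.subtype) : Set (X ⊗[k] N))
  add_mem' := by
    rintro _ _ ⟨ξ₁, h₁, rfl⟩ ⟨ξ₂, h₂, rfl⟩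
    exact ⟨ξ₁ + ξ₂, Submodule.add_mem _ h₁ h₂, map_add _ _ _⟩
  zero_mem' := ⟨0, Submodule.zero_mem _, map_zero _⟩
  smul_mem' := by
    rintro a _ ⟨ξ, hξ, rfl⟩
    obtain ⟨c, -, hdec⟩ := smulDecomp S ρ hT a
    rw [hdec ξ]
    exact ⟨∑ g : G, Phi S ρ (c g) g ξ,
      Submodule.sum_mem _ (fun g _ => Phi_maps S ρ hW (c g) g ξ hξ), rfl⟩

lemma mem_TW {W : Submodule k X} {hW : ∀ g, ∀ x ∈ W, ρ g x ∈ W} {t : T} :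
    t ∈ TW S ρ hT W hW ↔ ∃ ξ ∈ LinearMap.range (LinearMap.rTensor N W.subtype), hT.e ξ = t := Iff.rfl

end AuxGT
namespace AuxGT
open Module

variable {k Λ G A : Type u} [Field k] [Ring Λ] [Algebra k Λ]
  [Group G] [Fintype G] {σ : G →* (Λ ≃ₐ[k] Λ)} [Ring A] [Algebra k A]
  {N : Type u} [AddCommGroup N] [Module A N] [Module k N] [IsScalarTower k A N]
  {X : Type u} [AddCommGroup X] [Module k X] {T : Type u} [AddCommGroup T] [Module A T]

lemma aux_main [FiniteDimensional k X]
    (hloc : IsLocalRing (MonoidAlgebra k G))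
    (hrigid : ∀ (E : Type u) [AddCommGroup E] [Module A E]
      (i : N →ₗ[A] E) (p : E →ₗ[A] N),
      Function.Injective i → Function.Surjective p → Function.Exact i p →
      ∃ s : N →ₗ[A] E, p ∘ₗ s = LinearMap.id)
    (S : SkewGroupAlgebra k Λ G σ A) (ρ : Representation k G X)
    (hT : IsGTensor S X ρ N T) :
    ∀ (n : ℕ) (W : Submodule k X) (hW : ∀ g, ∀ x ∈ W, ρ g x ∈ W),
      finrank k W = n → Nonempty ((Fin n → N) ≃ₗ[A] ↥(TW S ρ hT W hW)) := by
  intro n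
  induction n with
  | zero =>
    intro W hW hrank
    have hWbot : W = ⊥ := Submodule.finrank_eq_zero.mp hrank
    subst hWbot
    have hz : ∀ t : ↥(TW S ρ hT ⊥ hW), t = 0 := by
      rintro ⟨t, ht⟩
      obtain ⟨ξ, ⟨ξ₀, rfl⟩, rfl⟩ := ht
      have h0 : LinearMap.rTensor N (⊥ : Submodule k X).subtype ξ₀ = 0 := by
        induction ξ₀ using TensorProduct.induction_on with
        | zero => rw [map_zero]
        | tmul x m =>
          have hx0 : x = 0 := Subtype.ext ((Submodule.mem_bot k).mp x.2)
          rw [hx0, TensorProduct.zero_tmul, map_zero]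
        | add ξ₁ ξ₂ h₁ h₂ => rw [map_add, h₁, h₂, add_zero]
      refine Subtype.ext ?_
      show hT.e (LinearMap.rTensor N (⊥ : Submodule k X).subtype ξ₀) = 0
      rw [h0, map_zero]
    haveI hsing : Subsingleton ↥(TW S ρ hT ⊥ hW) := ⟨fun a b => by rw [hz a, hz b]⟩
    exact ⟨LinearEquiv.ofBijective 0
      ⟨fun a b _ => Subsingleton.elim a b, fun t => ⟨0, Subsingleton.elim _ _⟩⟩⟩
  | succ n ih =>
    intro W hW hrank
    have hWne : W ≠ ⊥ := by
      intro h
      rw [h, finrank_bot] at hrank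
      omega
    obtain ⟨M, v, hMle, hMstab, hvW, hvM, htriv, hspan⟩ := aux_corank_one hloc ρ W hW hWne
    have hvne : v ≠ 0 := fun h => hvM (h ▸ M.zero_mem)
    have hMrank : finrank k M = n := by
      have hsup : M ⊔ Submodule.span k {v} = W := by
        refine le_antisymm (sup_le hMle ((Submodule.span_singleton_le_iff_mem _ _).mpr hvW)) ?_
        intro x hx
        obtain ⟨a, ha⟩ := hspan x hx
        rw [Submodule.mem_sup]
        exact ⟨x - a • v, ha, a • v,
          Submodule.smul_mem _ a (Submodule.mem_span_singleton_self v), by abel⟩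
      have hinf : M ⊓ Submodule.span k {v} = ⊥ := by
        rw [Submodule.eq_bot_iff]
        rintro x ⟨hxM, hxs⟩
        obtain ⟨a, rfl⟩ := Submodule.mem_span_singleton.mp hxs
        by_cases ha : a = 0
        · rw [ha, zero_smul]
        · exfalso
          apply hvM
          have h2 := M.smul_mem a⁻¹ hxM
          rwa [smul_smul, inv_mul_cancel₀ ha, one_smul] at h2
      have h1 := Submodule.finrank_sup_add_finrank_inf_eq M (Submodule.span k {v})
      rw [hsup, hinf, hrank, finrank_span_singleton hvne] at h1
      rw [finrank_bot] at h1
      omega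
    -- a functional cutting out `M` inside `W`
    set π := M.mkQ with hπ
    have hπvne : π v ≠ 0 := fun h => hvM ((Submodule.Quotient.mk_eq_zero M).mp h)
    obtain ⟨C, hC⟩ := Submodule.exists_isCompl (Submodule.span k {π v})
    set proj := Submodule.linearProjOfIsCompl _ C hC with hproj
    set f : X →ₗ[k] k :=
      (LinearEquiv.coord k _ (π v) hπvne).toLinearMap ∘ₗ proj ∘ₗ π with hf
    have hfv : f v = 1 := by
      show (LinearEquiv.coord k _ (π v) hπvne) (proj (π v)) = 1
      have h1 : proj (π v) = ⟨π v, Submodule.mem_span_singleton_self _⟩ :=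
        Submodule.linearProjOfIsCompl_apply_left hC
          ⟨π v, Submodule.mem_span_singleton_self _⟩
      rw [h1, LinearEquiv.coord_self]
    have hfM : ∀ x ∈ M, f x = 0 := by
      intro x hx
      show (LinearEquiv.coord k _ (π v) hπvne) (proj (π x)) = 0
      have h1 : π x = 0 := (Submodule.Quotient.mk_eq_zero M).mpr hx
      rw [h1, map_zero, map_zero]
    have hfW : ∀ g, ∀ x ∈ W, f (ρ g x) = f x := by
      intro g x hx
      have h1 : f (ρ g x - x) = 0 := hfM _ (htriv g x hx)
      rw [map_sub, sub_eq_zero] at h1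
      exact h1
    -- the `A`-linear functional on TW W
    set q : X ⊗[k] N →ₗ[k] N :=
      (TensorProduct.lid k N).toLinearMap ∘ₗ LinearMap.rTensor N f with hqdef
    have hq_tmul : ∀ (x : X) (m : N), q (x ⊗ₜ[k] m) = f x • m := by
      intro x m
      simp [hqdef, TensorProduct.lid_tmul]
    have hqPhi : ∀ (r : Λ) (g : G) (ξ₀ : ↥W ⊗[k] N),
        q (Phi S ρ r g (LinearMap.rTensor N W.subtype ξ₀)) =
          (S.ι r * (S.u g : A)) • q (LinearMap.rTensor N W.subtype ξ₀) := by
      intro r g ξ₀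
      induction ξ₀ using TensorProduct.induction_on with
      | zero => rw [map_zero, map_zero, map_zero, smul_zero]
      | tmul x m =>
        rw [LinearMap.rTensor_tmul, Submodule.coe_subtype, Phi_tmul, hq_tmul, hq_tmul]
        show f (ρ g ↑x) • ((S.ι r * (S.u g : A)) • m) = _
        rw [hfW g ↑x x.2]
        exact (smul_comm' (f ↑x) (S.ι r * (S.u g : A)) m).symm
      | add ξ₁ ξ₂ h₁ h₂ => simp only [map_add, h₁, h₂, smul_add]
    have hmemW : ∀ t : ↥(TW S ρ hT W hW),
        hT.e.symm ↑t ∈ LinearMap.range (LinearMap.rTensor N W.subtype) := by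
      rintro ⟨t, ht⟩
      obtain ⟨ξ, hξ, rfl⟩ := ht
      rw [AddEquiv.symm_apply_apply]
      exact hξ
    set pmap : ↥(TW S ρ hT W hW) →ₗ[A] N :=
      { toFun := fun t => q (hT.e.symm ↑t)
        map_add' := fun t₁ t₂ => by
          show q (hT.e.symm (↑t₁ + ↑t₂)) = _
          rw [map_add, map_add]
        map_smul' := fun a t => by
          obtain ⟨c, hc, hdec⟩ := smulDecomp S ρ hT a
          obtain ⟨ξ, hξ, hξe⟩ := t.2
          obtain ⟨ξ₀, rfl⟩ := hξ
          show q (hT.e.symm ↑(a • t)) = a • q (hT.e.symm ↑t)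
          have h1 : (↑(a • t) : T) =
              hT.e (∑ g : G, Phi S ρ (c g) g (LinearMap.rTensor N W.subtype ξ₀)) := by
            rw [show ((a • t : ↥(TW S ρ hT W hW)) : T) = a • (t : T) from rfl, ← hξe,
              hdec _]
          have h2 : hT.e.symm ↑t = LinearMap.rTensor N W.subtype ξ₀ := by
            rw [← hξe, AddEquiv.symm_apply_apply]
          rw [h1, h2, AddEquiv.symm_apply_apply, map_sum]
          rw [show ∀ z : N, a • z = a • z from fun _ => rfl]
          calc ∑ g : G, q (Phi S ρ (c g) g (LinearMap.rTensor N W.subtype ξ₀))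
              = ∑ g : G, (S.ι (c g) * (S.u g : A)) • q (LinearMap.rTensor N W.subtype ξ₀) :=
                Finset.sum_congr rfl fun g _ => hqPhi (c g) g ξ₀
            _ = (∑ g : G, S.ι (c g) * (S.u g : A)) • q (LinearMap.rTensor N W.subtype ξ₀) :=
                Finset.sum_smul.symm
            _ = a • q (LinearMap.rTensor N W.subtype ξ₀) := by rw [← hc] } with hpmap
    have hpval : ∀ t : ↥(TW S ρ hT W hW), pmap t = q (hT.e.symm ↑t) := fun _ => rfl
    have hpsurj : Function.Surjective pmap := by
      intro m
      have hmem : hT.e (v ⊗ₜ[k] m) ∈ TW S ρ hT W hW := by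
        refine ⟨v ⊗ₜ[k] m, ⟨(⟨v, hvW⟩ : ↥W) ⊗ₜ[k] m, ?_⟩, rfl⟩
        rw [LinearMap.rTensor_tmul, Submodule.coe_subtype]
      refine ⟨⟨hT.e (v ⊗ₜ[k] m), hmem⟩, ?_⟩
      rw [hpval]
      show q (hT.e.symm (hT.e (v ⊗ₜ[k] m))) = m
      rw [AddEquiv.symm_apply_apply, hq_tmul, hfv, one_smul]
    -- inclusion of TW M
    have hMtoW : ∀ ξ₀ : ↥M ⊗[k] N, LinearMap.rTensor N M.subtype ξ₀ ∈
        LinearMap.range (LinearMap.rTensor N W.subtype) := by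
      intro ξ₀
      induction ξ₀ using TensorProduct.induction_on with
      | zero => rw [map_zero]; exact Submodule.zero_mem _
      | tmul x m =>
        refine ⟨(⟨↑x, hMle x.2⟩ : ↥W) ⊗ₜ[k] m, ?_⟩
        rw [LinearMap.rTensor_tmul, LinearMap.rTensor_tmul]
        rfl
      | add ξ₁ ξ₂ h₁ h₂ => rw [map_add]; exact Submodule.add_mem _ h₁ h₂
    have hsub : TW S ρ hT M hMstab ≤ TW S ρ hT W hW := by
      rintro _ ⟨ξ, ⟨ξ₀, rfl⟩, rfl⟩
      exact ⟨_, hMtoW ξ₀, rfl⟩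
    obtain ⟨ψM⟩ := ih M hMstab hMrank
    set imap : (Fin n → N) →ₗ[A] ↥(TW S ρ hT W hW) :=
      Submodule.inclusion hsub ∘ₗ ψM.toLinearMap with himap
    have hinj : Function.Injective imap :=
      (Submodule.inclusion_injective hsub).comp ψM.injective
    have hqM : ∀ ξ₀ : ↥M ⊗[k] N, q (LinearMap.rTensor N M.subtype ξ₀) = 0 := by
      intro ξ₀
      induction ξ₀ using TensorProduct.induction_on with
      | zero => rw [map_zero, map_zero]
      | tmul x m =>
        rw [LinearMap.rTensor_tmul, Submodule.coe_subtype, hq_tmul, hfM _ x.2, zero_smul]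
      | add ξ₁ ξ₂ h₁ h₂ => rw [map_add, map_add, h₁, h₂, add_zero]
    have hdecW : ∀ ξ₀ : ↥W ⊗[k] N,
        ∃ ζ ∈ LinearMap.range (LinearMap.rTensor N M.subtype),
          LinearMap.rTensor N W.subtype ξ₀ =
            ζ + (v ⊗ₜ[k] q (LinearMap.rTensor N W.subtype ξ₀)) := by
      intro ξ₀
      induction ξ₀ using TensorProduct.induction_on with
      | zero =>
        exact ⟨0, Submodule.zero_mem _,
          by rw [map_zero, map_zero, TensorProduct.tmul_zero, add_zero]⟩
      | tmul x m =>
        have hfx : (x : X) - f ↑x • v ∈ M := by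
          obtain ⟨a, ha⟩ := hspan ↑x x.2
          have h2 : f (↑x - a • v) = 0 := hfM _ ha
          rw [map_sub, map_smul, hfv, smul_eq_mul, mul_one, sub_eq_zero] at h2
          rw [h2]
          exact ha
        refine ⟨LinearMap.rTensor N M.subtype ((⟨↑x - f ↑x • v, hfx⟩ : ↥M) ⊗ₜ[k] m),
          ⟨_, rfl⟩, ?_⟩
        rw [LinearMap.rTensor_tmul, LinearMap.rTensor_tmul, Submodule.coe_subtype,
          Submodule.coe_subtype, hq_tmul]
        rw [TensorProduct.sub_tmul, ← TensorProduct.smul_tmul]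
        abel
      | add ξ₁ ξ₂ h₁ h₂ =>
        obtain ⟨ζ₁, hζ₁, e₁⟩ := h₁
        obtain ⟨ζ₂, hζ₂, e₂⟩ := h₂
        refine ⟨ζ₁ + ζ₂, Submodule.add_mem _ hζ₁ hζ₂, ?_⟩
        conv_lhs => rw [map_add, e₁, e₂]
        conv_rhs => rw [map_add, map_add, TensorProduct.tmul_add]
        abel
    have hker : LinearMap.ker pmap = LinearMap.range imap := by
      refine le_antisymm ?_ ?_
      · intro t ht
        have hq0 : q (hT.e.symm ↑t) = 0 := ht
        obtain ⟨ξ, hξ, hξe⟩ := t.2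
        obtain ⟨ξ₀, rfl⟩ := hξ
        have hsymm : hT.e.symm ↑t = LinearMap.rTensor N W.subtype ξ₀ := by
          rw [← hξe, AddEquiv.symm_apply_apply]
        rw [hsymm] at hq0
        obtain ⟨ζ, hζ, hdec⟩ := hdecW ξ₀
        rw [hq0, TensorProduct.tmul_zero, add_zero] at hdec
        have htM : (↑t : T) ∈ TW S ρ hT M hMstab := ⟨ζ, hζ, by rw [← hdec, hξe]⟩
        obtain ⟨w, hw⟩ := ψM.surjective ⟨↑t, htM⟩
        refine ⟨w, ?_⟩
        show Submodule.inclusion hsub (ψM w) = t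
        rw [hw]
        exact Subtype.ext rfl
      · rintro _ ⟨w, rfl⟩
        show q (hT.e.symm ↑(Submodule.inclusion hsub (ψM w))) = 0
        obtain ⟨ξ, ⟨ξ₀, rfl⟩, hξe⟩ := (ψM w).2
        have h1 : (↑(Submodule.inclusion hsub (ψM w)) : T) =
            hT.e (LinearMap.rTensor N M.subtype ξ₀) := by
          exact hξe.symm
        rw [h1, AddEquiv.symm_apply_apply]
        exact hqM ξ₀
    obtain ⟨s, hs⟩ := aux_keyA hrigid n ↥(TW S ρ hT W hW) imap pmap hinj hpsurj hker
    exact aux_splitIso imap pmap s hinj hker hs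

end AuxGT
namespace AuxGT
open Module

variable {k Λ G A : Type u} [Field k] [Ring Λ] [Algebra k Λ]
  [Group G] [Fintype G] {σ : G →* (Λ ≃ₐ[k] Λ)} [Ring A] [Algebra k A]
  {N : Type u} [AddCommGroup N] [Module A N] [Module k N] [IsScalarTower k A N]

/-- `k_G ⊗ N ≅ N` as `A`-modules. -/
lemma isoNTk (S : SkewGroupAlgebra k Λ G σ A)
    {Tk : Type u} [AddCommGroup Tk] [Module A Tk]
    (hTk : IsGTensor S k (Representation.trivial k (G := G) (V := k)) N Tk) :
    Nonempty (N ≃ₗ[A] Tk) := by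
  set φ : N →ₗ[A] Tk :=
    { toFun := fun n => hTk.e ((1 : k) ⊗ₜ[k] n)
      map_add' := fun n₁ n₂ => by rw [← map_add, ← TensorProduct.tmul_add]
      map_smul' := fun a n => by
        obtain ⟨c, hc, hdec⟩ := smulDecomp S _ hTk a
        have h1 : ∀ g : G, Phi S (Representation.trivial k (G := G) (V := k)) (c g) g
            ((1 : k) ⊗ₜ[k] n) = (1 : k) ⊗ₜ[k] ((S.ι (c g) * (S.u g : A)) • n) := by
          intro g
          rw [Phi_tmul]
          rfl
        show hTk.e ((1 : k) ⊗ₜ[k] (a • n)) = a • hTk.e ((1 : k) ⊗ₜ[k] n)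
        rw [hdec, Finset.sum_congr rfl fun g _ => h1 g, ← TensorProduct.tmul_sum]
        congr 1
        rw [hc, Finset.sum_smul] } with hφ
    -- bijectivity
  have hφval : ∀ n, φ n = hTk.e ((1 : k) ⊗ₜ[k] n) := fun _ => rfl
  refine ⟨LinearEquiv.ofBijective φ ⟨?_, ?_⟩⟩
  · intro n₁ n₂ h
    have h2 : ((1:k) ⊗ₜ[k] n₁ : k ⊗[k] N) = (1:k) ⊗ₜ[k] n₂ := hTk.e.injective h
    have h3 := congrArg (TensorProduct.lid k N) h2
    rwa [TensorProduct.lid_tmul, TensorProduct.lid_tmul, one_smul, one_smul] at h3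
  · intro t
    refine ⟨TensorProduct.lid k N (hTk.e.symm t), ?_⟩
    rw [hφval]
    have h4 : ((1:k) ⊗ₜ[k] (TensorProduct.lid k N (hTk.e.symm t)) : k ⊗[k] N)
        = hTk.e.symm t := by
      rw [← TensorProduct.lid_symm_apply, LinearEquiv.symm_apply_apply]
    rw [h4, AddEquiv.apply_symm_apply]

variable {X : Type u} [AddCommGroup X] [Module k X] {T : Type u} [AddCommGroup T] [Module A T]

lemma TW_top (S : SkewGroupAlgebra k Λ G σ A) (ρ : Representation k G X)
    (hT : IsGTensor S X ρ N T) (t : T) :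
    t ∈ TW S ρ hT ⊤ (fun _ _ _ => trivial) := by
  obtain ⟨ξ₀, hξ₀⟩ := LinearMap.rTensor_surjective N
    (g := (⊤ : Submodule k X).subtype) (fun x => ⟨⟨x, trivial⟩, rfl⟩) (hT.e.symm t)
  exact ⟨_, ⟨ξ₀, rfl⟩, by rw [hξ₀]; exact hT.e.apply_symm_apply t⟩

/-- The equivalence `TW ⊤ ≃ T`. -/
noncomputable def equivTop (S : SkewGroupAlgebra k Λ G σ A) (ρ : Representation k G X)
    (hT : IsGTensor S X ρ N T) :
    ↥(TW S ρ hT ⊤ (fun _ _ _ => trivial)) ≃ₗ[A] T :=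
  LinearEquiv.ofBijective (Submodule.subtype _)
    ⟨Submodule.injective_subtype _, fun t => ⟨⟨t, TW_top S ρ hT t⟩, rfl⟩⟩

end AuxGT

set_option maxHeartbeats 1000000 in
set_option synthInstance.maxHeartbeats 200000 in
open AuxGT Module in
/-- Let `kG` be local and let `N` be a rigid `A`-module (every self-extension of `N`
splits).  Then:
(1) for every finite-dimensional `G`-module `X`, the module `X ⊗_k^G N` lies in `add N`;
(2) `kG ⊗_k^G N` is the direct sum of `S ⊗_k^G N` over the composition factors `S` of
`kG`, i.e. (`kG` being local with unique simple the trivial module `k_G`, occurring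
`dim kG = |G|` times) it is isomorphic to `(k_G ⊗_k^G N)^{⊕ |G|}`;
(3) the canonical map `kG ⊗_k^G N → N`, `g ⊗ n ↦ n`, splits. -/
theorem gTensor_mem_add_of_local_rigid
    (k Λ G A : Type u) [Field k] [Ring Λ] [Algebra k Λ] [FiniteDimensional k Λ]
    [Group G] [Fintype G] (σ : G →* (Λ ≃ₐ[k] Λ)) [Ring A] [Algebra k A]
    (S : SkewGroupAlgebra k Λ G σ A)
    (hloc : IsLocalRing (MonoidAlgebra k G))
    (N : Type u) [AddCommGroup N] [Module A N] [Module k N] [IsScalarTower k A N]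
    (hrigid : ∀ (E : Type u) [AddCommGroup E] [Module A E]
      (i : N →ₗ[A] E) (p : E →ₗ[A] N),
      Function.Injective i → Function.Surjective p → Function.Exact i p →
      ∃ s : N →ₗ[A] E, p ∘ₗ s = LinearMap.id) :
    -- (1)
    (∀ (X : Type u) [AddCommGroup X] [Module k X] [FiniteDimensional k X]
      (ρ : Representation k G X) (T : Type u) [AddCommGroup T] [Module A T],
      IsGTensor S X ρ N T →
      ∃ (m : ℕ) (inj : T →ₗ[A] (Fin m → N)) (proj : (Fin m → N) →ₗ[A] T),
        proj ∘ₗ inj = LinearMap.id) ∧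
    -- (2)
    (∀ (TkG Tk : Type u) [AddCommGroup TkG] [Module A TkG] [AddCommGroup Tk] [Module A Tk],
      IsGTensor S (G →₀ k) (ofMulActionFinsupp k G G) N TkG →
      IsGTensor S k (Representation.trivial k (G := G) (V := k)) N Tk →
      Nonempty (TkG ≃ₗ[A] (Fin (Fintype.card G) → Tk))) ∧
    -- (3)
    (∀ (TkG : Type u) [AddCommGroup TkG] [Module A TkG]
      (hTkG : IsGTensor S (G →₀ k) (ofMulActionFinsupp k G G) N TkG)
      (c : TkG →ₗ[A] N),
      (∀ (g : G) (n : N), c (hTkG.e (Finsupp.single g (1 : k) ⊗ₜ[k] n)) = n) →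
      ∃ s : N →ₗ[A] TkG, c ∘ₗ s = LinearMap.id) := by
  classical
  haveI : FiniteDimensional k (G →₀ k) :=
    Module.Finite.equiv (Finsupp.linearEquivFunOnFinite k k G).symm
  refine ⟨?_, ?_, ?_⟩
  · -- (1)
    intro X _ _ _ ρ T _ _ hT
    obtain ⟨ψ⟩ := aux_main hloc hrigid S ρ hT (finrank k (⊤ : Submodule k X)) ⊤
      (fun _ _ _ => trivial) rfl
    set χ := equivTop S ρ hT
    refine ⟨finrank k (⊤ : Submodule k X),
      ψ.symm.toLinearMap ∘ₗ χ.symm.toLinearMap,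
      χ.toLinearMap ∘ₗ ψ.toLinearMap, ?_⟩
    refine LinearMap.ext fun t => ?_
    simp
  · -- (2)
    intro TkG Tk _ _ _ _ hTkG hTk
    obtain ⟨θ⟩ := isoNTk S hTk
    obtain ⟨ψG⟩ := aux_main hloc hrigid S (ofMulActionFinsupp k G G) hTkG
      (Fintype.card G) ⊤ (fun _ _ _ => trivial)
      (by rw [finrank_top, Module.finrank_finsupp_self])
    exact ⟨((equivTop S _ hTkG).symm.trans ψG.symm).trans
      (LinearEquiv.piCongrRight fun _ => θ)⟩
  · -- (3)
    intro TkG _ _ hTkG c hcan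
    set ε' : (G →₀ k) →ₗ[k] k := Finsupp.linearCombination k (fun _ : G => (1:k)) with hε'
    have hε'single : ∀ (g : G) (a : k), ε' (Finsupp.single g a) = a := by
      intro g a
      rw [hε', Finsupp.linearCombination_single, smul_eq_mul, mul_one]
    set Wε := LinearMap.ker ε' with hWε
    have hWεstab : ∀ g, ∀ x ∈ Wε, ofMulActionFinsupp k G G g x ∈ Wε := by
      intro g x hx
      have hcomp : ε' ∘ₗ (ofMulActionFinsupp k G G g) = ε' := by
        refine Finsupp.lhom_ext fun h a => ?_
        show ε' (ofMulActionFinsupp k G G g (Finsupp.single h a)) = ε' (Finsupp.single h a)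
        rw [show ofMulActionFinsupp k G G g (Finsupp.single h a) = Finsupp.single (g • h) a from Finsupp.mapDomain_single]
        rw [hε'single, hε'single]
      show ε' (ofMulActionFinsupp k G G g x) = 0
      have h1 : ε' (ofMulActionFinsupp k G G g x) = ε' x := congrFun (congrArg DFunLike.coe hcomp) x
      rw [h1]
      exact hx
    have hrankWε : finrank k ↥Wε + 1 = Fintype.card G := by
      have h1 := LinearMap.finrank_range_add_finrank_ker ε'
      have h2 : LinearMap.range ε' = ⊤ := by
        rw [LinearMap.range_eq_top]
        exact fun a => ⟨Finsupp.single 1 a, hε'single 1 a⟩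
      rw [h2, finrank_top, Module.finrank_self, Module.finrank_finsupp_self, ← hWε] at h1
      omega
    obtain ⟨ψW⟩ := aux_main hloc hrigid S (ofMulActionFinsupp k G G) hTkG (finrank k ↥Wε) Wε hWεstab rfl
    set imap : (Fin (finrank k ↥Wε) → N) →ₗ[A] TkG :=
      Submodule.subtype _ ∘ₗ ψW.toLinearMap with himap
    have hinj : Function.Injective imap :=
      (Submodule.injective_subtype _).comp ψW.injective
    have hcsurj : Function.Surjective c := fun n => ⟨hTkG.e (Finsupp.single 1 1 ⊗ₜ[k] n), hcan 1 n⟩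
    -- compute c on all of TkG
    set cq : (G →₀ k) ⊗[k] N →ₗ[k] N :=
      (TensorProduct.lid k N).toLinearMap ∘ₗ LinearMap.rTensor N ε' with hcq
    have hcq_tmul : ∀ (x : G →₀ k) (n : N), cq (x ⊗ₜ[k] n) = ε' x • n := by
      intro x n
      simp [hcq, TensorProduct.lid_tmul]
    have hce : ∀ ξ : (G →₀ k) ⊗[k] N, c (hTkG.e ξ) = cq ξ := by
      intro ξ
      induction ξ using TensorProduct.induction_on with
      | zero => rw [map_zero, map_zero, map_zero]
      | tmul x n =>
        have hx : x = ∑ g ∈ x.support, Finsupp.single g (x g) :=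
          (Finsupp.sum_single x).symm
        rw [hcq_tmul]
        conv_lhs => rw [hx]
        rw [TensorProduct.sum_tmul, map_sum, map_sum]
        have hterm : ∀ g ∈ x.support,
            c (hTkG.e (Finsupp.single g (x g) ⊗ₜ[k] n)) = x g • n := by
          intro g _
          have h1 : (Finsupp.single g (x g) : G →₀ k) = x g • Finsupp.single g 1 := by
            rw [Finsupp.smul_single, smul_eq_mul, mul_one]
          rw [h1, TensorProduct.smul_tmul, hcan g (x g • n)]
        rw [Finset.sum_congr rfl hterm]
        conv_rhs => rw [hx]
        rw [map_sum, Finset.sum_smul]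
        refine Finset.sum_congr rfl fun g _ => ?_
        rw [hε'single]
      | add ξ₁ ξ₂ h₁ h₂ => rw [map_add, map_add, map_add, h₁, h₂]
    -- q vanishes on Wε ⊗ N
    have hcqW : ∀ ξ₀ : ↥Wε ⊗[k] N, cq (LinearMap.rTensor N Wε.subtype ξ₀) = 0 := by
      intro ξ₀
      induction ξ₀ using TensorProduct.induction_on with
      | zero => rw [map_zero, map_zero]
      | tmul x n =>
        rw [LinearMap.rTensor_tmul, Submodule.coe_subtype, hcq_tmul,
          show ε' ↑x = 0 from x.2, zero_smul]
      | add ξ₁ ξ₂ h₁ h₂ => rw [map_add, map_add, h₁, h₂, add_zero]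
    -- decomposition
    have hdecG : ∀ ξ : (G →₀ k) ⊗[k] N,
        ∃ ζ ∈ LinearMap.range (LinearMap.rTensor N Wε.subtype),
          ξ = ζ + (Finsupp.single (1 : G) (1 : k)) ⊗ₜ[k] cq ξ := by
      intro ξ
      induction ξ using TensorProduct.induction_on with
      | zero => exact ⟨0, Submodule.zero_mem _,
          by rw [map_zero, TensorProduct.tmul_zero, add_zero]⟩
      | tmul x n =>
        have hmem : x - ε' x • Finsupp.single (1:G) (1:k) ∈ Wε := by
          show ε' _ = 0
          rw [map_sub, map_smul, hε'single, smul_eq_mul, mul_one, sub_self]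
        refine ⟨LinearMap.rTensor N Wε.subtype
          ((⟨x - ε' x • Finsupp.single (1:G) (1:k), hmem⟩ : ↥Wε) ⊗ₜ[k] n), ⟨_, rfl⟩, ?_⟩
        rw [LinearMap.rTensor_tmul, Submodule.coe_subtype, hcq_tmul]
        rw [TensorProduct.sub_tmul, ← TensorProduct.smul_tmul]
        abel
      | add ξ₁ ξ₂ h₁ h₂ =>
        obtain ⟨ζ₁, hζ₁, e₁⟩ := h₁
        obtain ⟨ζ₂, hζ₂, e₂⟩ := h₂
        refine ⟨ζ₁ + ζ₂, Submodule.add_mem _ hζ₁ hζ₂, ?_⟩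
        conv_lhs => rw [e₁, e₂]
        conv_rhs => rw [map_add, TensorProduct.tmul_add]
        abel
    have hkerc : LinearMap.ker c = LinearMap.range imap := by
      refine le_antisymm ?_ ?_
      · intro t ht
        have hct : c t = 0 := ht
        have h1 : c t = cq (hTkG.e.symm t) := by
          conv_lhs => rw [← hTkG.e.apply_symm_apply t]
          exact hce _
        rw [hct] at h1
        obtain ⟨ζ, hζ, hdec⟩ := hdecG (hTkG.e.symm t)
        rw [← h1, TensorProduct.tmul_zero, add_zero] at hdec
        have htM : t ∈ TW S (ofMulActionFinsupp k G G) hTkG Wε hWεstab :=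
          ⟨ζ, hζ, by rw [← hdec, hTkG.e.apply_symm_apply]⟩
        obtain ⟨w, hw⟩ := ψW.surjective ⟨t, htM⟩
        exact ⟨w, by rw [himap]; show ↑(ψW w) = t; rw [hw]⟩
      · rintro _ ⟨w, rfl⟩
        show c (↑(ψW w) : TkG) = 0
        obtain ⟨ξ, ⟨ξ₀, rfl⟩, hξe⟩ := (ψW w).2
        rw [← hξe, hce]
        exact hcqW ξ₀
    exact aux_keyA hrigid (finrank k ↥Wε) TkG imap c hinj hcsurj hkerc
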